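/- arXiv:2302.07508 — 3 statements merged into one kernel-verified Lean document; each statement's English description precedes it below -/
import Mathlib

section
/- Let φ : ℝ → ℝ be continuously differentiable and strictly increasing, let a ∈ ℝ, l > 0, T ∈ ℝ, let p ≥ 1 be an integer, and let A_p < B_p be reverse-iterate endpoints with φ^[p](A_p) = T and φ^[p](B_p) = T + 2l. If {f_n}_{n=0}^∞ is an orthogonal system in L²([a, a+2l]) (i.e. ∫_a^{a+2l} f_m(t) f_n(t) dt = 0 for all m ≠ n), then the transformed functions f_n^{p}(t) := f_n(u_p(t)) · w_p(t) satisfy ∫_a^{a+2l} f_m^{p}(t) f_n^{p}(t) dt = 0 for all m ≠ n, and moreover ∫_a^{a+2l} (f_n^{p}(t))² dt = (2l/(B_p − A_p)) ∫_a^{a+2l} f_n(t)² dt for every n. In particular {f_n^{p}}_{n=0}^∞ is again an orthogonal system in L²([a, a+2l]). -/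
open MeasureTheory Set

/-- The affine map `ρ_p` sending `[a, a+2l]` onto `[A, B]`. -/
noncomputable def rhoMap (A B a l : ℝ) (t : ℝ) : ℝ := (B - A) / (2 * l) * (t - a) + A

/-- The map `u_p(t) = φ^[p](ρ_p(t)) − T + a`. -/
noncomputable def uMap (φ : ℝ → ℝ) (p : ℕ) (A B a l T : ℝ) (t : ℝ) : ℝ :=
  φ^[p] (rhoMap A B a l t) - T + a

/-- The weight `w_p(t) = ∏_{r=0}^{p−1} √(φ′(φ^[r](ρ_p(t))))`. -/
noncomputable def wMap (φ : ℝ → ℝ) (p : ℕ) (A B a l : ℝ) (t : ℝ) : ℝ :=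
  ∏ r ∈ Finset.range p, Real.sqrt (deriv φ (φ^[r] (rhoMap A B a l t)))

/-- Derivative of a monotone differentiable function is nonnegative. -/
lemma deriv_nonneg_of_monotone {φ : ℝ → ℝ} (hd : Differentiable ℝ φ)
    (hm : Monotone φ) (x : ℝ) : 0 ≤ deriv φ x := by
  have h : HasDerivAt φ (deriv φ x) x := (hd x).hasDerivAt
  rw [hasDerivAt_iff_tendsto_slope] at h
  have h' : Filter.Tendsto (slope φ x) (nhdsWithin x (Ioi x)) (nhds (deriv φ x)) :=
    h.mono_left (nhdsWithin_mono x fun y hy => ne_of_gt hy)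
  refine ge_of_tendsto h' ?_
  filter_upwards [self_mem_nhdsWithin] with y hy
  rw [slope_def_field]
  exact div_nonneg (sub_nonneg.2 (hm (le_of_lt hy))) (sub_nonneg.2 (le_of_lt hy))

/-- Chain rule for iterates. -/
lemma iterate_hasDerivAt {φ : ℝ → ℝ} (hφ : ContDiff ℝ 1 φ) (p : ℕ) (x : ℝ) :
    HasDerivAt (φ^[p]) (∏ r ∈ Finset.range p, deriv φ (φ^[r] x)) x := by
  induction p with
  | zero => simpa using hasDerivAt_id x
  | succ p ih =>
    have h1 : HasDerivAt φ (deriv φ (φ^[p] x)) (φ^[p] x) :=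
      (hφ.differentiable one_ne_zero (φ^[p] x)).hasDerivAt
    have h2 := h1.comp x ih
    rw [Function.iterate_succ']
    rw [Finset.prod_range_succ]
    simpa [mul_comm] using h2

/-- The key substitution identity. -/
lemma key_subst
    (φ : ℝ → ℝ) (hφ : ContDiff ℝ 1 φ) (hmono : StrictMono φ)
    (a l T : ℝ) (hl : 0 < l) (p : ℕ)
    (A B : ℝ) (hAB : A < B) (hA : φ^[p] A = T) (hB : φ^[p] B = T + 2 * l)
    (F : ℝ → ℝ) :
    ∫ t in Ioc a (a + 2 * l), wMap φ p A B a l t ^ 2 * F (uMap φ p A B a l T t)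
      = (2 * l / (B - A)) * ∫ t in Ioc a (a + 2 * l), F t := by
  set c : ℝ := (B - A) / (2 * l) with hc
  have hc0 : 0 < c := div_pos (by linarith) (by linarith)
  have hc2l : c * (2 * l) = B - A := by
    rw [hc]; exact div_mul_cancel₀ _ (by positivity)
  have hrho_a : rhoMap A B a l a = A := by simp [rhoMap]
  have hrho_b : rhoMap A B a l (a + 2 * l) = B := by
    simp only [rhoMap, add_sub_cancel_left]
    rw [← hc]; linarith [hc2l]
  -- derivative of uMap
  have hrho_deriv : ∀ t : ℝ, HasDerivAt (rhoMap A B a l) c t := by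
    intro t
    have : HasDerivAt (fun t : ℝ => c * (t - a) + A) (c * 1) t :=
      (((hasDerivAt_id t).sub_const a).const_mul c).add_const A
    show HasDerivAt (fun t : ℝ => c * (t - a) + A) c t
    simpa using this
  set D : ℝ → ℝ := fun t => ∏ r ∈ Finset.range p, deriv φ (φ^[r] (rhoMap A B a l t)) with hD
  have hu_deriv : ∀ t : ℝ, HasDerivAt (uMap φ p A B a l T) (D t * c) t := by
    intro t
    have h1 := (iterate_hasDerivAt hφ p (rhoMap A B a l t)).comp t (hrho_deriv t)
    have h2 := (h1.sub_const T).add_const a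
    show HasDerivAt (fun t => φ^[p] (rhoMap A B a l t) - T + a) (D t * c) t
    simpa [Function.comp, hD] using h2
  have hDnonneg : ∀ t, 0 ≤ D t :=
    fun t => Finset.prod_nonneg fun r _ =>
      deriv_nonneg_of_monotone (hφ.differentiable one_ne_zero) hmono.monotone _
  have hw_sq : ∀ t, wMap φ p A B a l t ^ 2 = D t := by
    intro t
    rw [wMap, hD, ← Finset.prod_pow]
    refine Finset.prod_congr rfl fun r _ => ?_
    exact Real.sq_sqrt (deriv_nonneg_of_monotone (hφ.differentiable one_ne_zero) hmono.monotone _)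
  -- strict monotonicity of uMap
  have hu_mono : StrictMono (uMap φ p A B a l T) := by
    intro x y hxy
    have hrho_mono : rhoMap A B a l x < rhoMap A B a l y := by
      simp only [rhoMap]; nlinarith
    have := (hmono.iterate p) hrho_mono
    simp only [uMap]; linarith
  -- endpoint values
  have hua : uMap φ p A B a l T a = a := by simp [uMap, hrho_a, hA]
  have hub : uMap φ p A B a l T (a + 2 * l) = a + 2 * l := by
    simp [uMap, hrho_b, hB]; ring
  have hab : a ≤ a + 2 * l := by linarith
  -- image of Ioc
  have hu_cont : Continuous (uMap φ p A B a l T) := by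
    have hd : Differentiable ℝ (uMap φ p A B a l T) := fun t => (hu_deriv t).differentiableAt
    exact hd.continuous
  have himg : uMap φ p A B a l T '' Ioc a (a + 2 * l) = Ioc a (a + 2 * l) := by
    apply Subset.antisymm
    · rintro _ ⟨t, ht, rfl⟩
      constructor
      · calc a = uMap φ p A B a l T a := hua.symm
          _ < _ := hu_mono ht.1
      · calc uMap φ p A B a l T t ≤ uMap φ p A B a l T (a + 2 * l) :=
              hu_mono.monotone ht.2
          _ = a + 2 * l := hub
    · have := intermediate_value_Ioc hab hu_cont.continuousOn
      rwa [hua, hub] at this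
  -- change of variables
  have hsubst := integral_image_eq_integral_abs_deriv_smul (measurableSet_Ioc)
      (fun x (_ : x ∈ Ioc a (a + 2 * l)) => (hu_deriv x).hasDerivWithinAt)
      (hu_mono.injective.injOn) F
  rw [himg] at hsubst
  have habs : ∀ x, |D x * c| • F (uMap φ p A B a l T x)
      = c * (wMap φ p A B a l x ^ 2 * F (uMap φ p A B a l T x)) := by
    intro x
    rw [abs_of_nonneg (mul_nonneg (hDnonneg x) hc0.le), smul_eq_mul, hw_sq]
    ring
  simp only [habs] at hsubst
  rw [MeasureTheory.integral_const_mul] at hsubst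
  have hcinv : (2 * l / (B - A)) = c⁻¹ := by
    rw [hc, inv_div]
  rw [hcinv, eq_comm, inv_mul_eq_iff_eq_mul₀ (ne_of_gt hc0)]
  exact hsubst

/-- The first-generation transform of an `L²`-orthogonal system on
`[a, a+2l]` is again an orthogonal system, with norms rescaled by `2l/(B_p − A_p)`. -/
theorem first_generation_orthogonal
    (φ : ℝ → ℝ) (hφ : ContDiff ℝ 1 φ) (hmono : StrictMono φ)
    (a l T : ℝ) (hl : 0 < l) (p : ℕ) (hp : 1 ≤ p)
    (A B : ℝ) (hAB : A < B) (hA : φ^[p] A = T) (hB : φ^[p] B = T + 2 * l)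
    (f : ℕ → ℝ → ℝ)
    (hf : ∀ n, MemLp (f n) 2 (volume.restrict (Set.Ioc a (a + 2 * l))))
    (horth : ∀ m n, m ≠ n → ∫ t in a..(a + 2 * l), f m t * f n t = 0) :
    (∀ m n, m ≠ n →
      ∫ t in a..(a + 2 * l),
        (f m (uMap φ p A B a l T t) * wMap φ p A B a l t) *
          (f n (uMap φ p A B a l T t) * wMap φ p A B a l t) = 0) ∧
    (∀ n, ∫ t in a..(a + 2 * l),
        (f n (uMap φ p A B a l T t) * wMap φ p A B a l t) ^ 2
          = (2 * l / (B - A)) * ∫ t in a..(a + 2 * l), (f n t) ^ 2) := by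
  have hab : a ≤ a + 2 * l := by linarith
  have key : ∀ m n : ℕ,
      ∫ t in a..(a + 2 * l),
        (f m (uMap φ p A B a l T t) * wMap φ p A B a l t) *
          (f n (uMap φ p A B a l T t) * wMap φ p A B a l t)
        = (2 * l / (B - A)) * ∫ t in a..(a + 2 * l), f m t * f n t := by
    intro m n
    rw [intervalIntegral.integral_of_le hab, intervalIntegral.integral_of_le hab]
    have h2 : ∀ t, (f m (uMap φ p A B a l T t) * wMap φ p A B a l t) *
          (f n (uMap φ p A B a l T t) * wMap φ p A B a l t)
        = wMap φ p A B a l t ^ 2 *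
            ((fun x => f m x * f n x) (uMap φ p A B a l T t)) := by
      intro t; simp only; ring
    simp only [h2]
    exact key_subst φ hφ hmono a l T hl p A B hAB hA hB (fun x => f m x * f n x)
  constructor
  · intro m n hmn
    rw [key m n, horth m n hmn, mul_zero]
  · intro n
    have := key n n
    have h3 : ∀ t : ℝ, ∀ g : ℝ → ℝ, g t * g t = g t ^ 2 := fun t g => (sq (g t)).symm
    calc ∫ t in a..(a + 2 * l),
          (f n (uMap φ p A B a l T t) * wMap φ p A B a l t) ^ 2
        = ∫ t in a..(a + 2 * l),
            (f n (uMap φ p A B a l T t) * wMap φ p A B a l t) *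
              (f n (uMap φ p A B a l T t) * wMap φ p A B a l t) := by
          simp only [← sq]
      _ = (2 * l / (B - A)) * ∫ t in a..(a + 2 * l), f n t * f n t := key n n
      _ = (2 * l / (B - A)) * ∫ t in a..(a + 2 * l), (f n t) ^ 2 := by
          simp only [← sq]
end

section
/- Let φ : ℝ → ℝ be continuously differentiable and strictly increasing, let a ∈ ℝ, l > 0, T ∈ ℝ, let s ≥ 1 and k ≥ 1 be integers, and for each p ∈ {1, …, k} let A_p < B_p be reverse-iterate endpoints with φ^[p](A_p) = T and φ^[p](B_p) = T + 2l. For an orthogonal system {f_n}_{n=0}^∞ in L²([a, a+2l]) and indices p₁, …, p_s ∈ {1, …, k}, define the s-th generation functions f_n^{p₁,…,p_s}(t) := f_n(u_{p₁}(u_{p₂}(⋯ u_{p_s}(t) ⋯))) · ∏_{i=1}^{s} w_{p_i}(u_{p_{i+1}}(u_{p_{i+2}}(⋯ u_{p_s}(t) ⋯))) (where the inner composition is empty, i.e. equals t, when i = s). Then for every choice of indices p₁, …, p_s, the family {f_n^{p₁,…,p_s}}_{n=0}^∞ is an orthogonal system in L²([a, a+2l]): ∫_a^{a+2l} f_m^{p₁,…,p_s}(t)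 f_n^{p₁,…,p_s}(t) dt = 0 for all m ≠ n; moreover each composite map u_{p₁}(u_{p₂}(⋯ u_{p_s}(t) ⋯)) is an automorphism of [a, a+2l]. -/
open MeasureTheory Set

/-- The composite map `u_{p₁}(u_{p₂}(⋯ u_{p_s}(t) ⋯))` for the list `[p₁, …, p_s]`. -/
noncomputable def compU (φ : ℝ → ℝ) (a l T : ℝ) (A B : ℕ → ℝ) : List ℕ → ℝ → ℝ
  | [], t => t
  | p :: ps, t => uMap φ p (A p) (B p) a l T (compU φ a l T A B ps t)

/-- The `s`-th generation transform
`f^{p₁,…,p_s}(t) = f(u_{p₁}(⋯ u_{p_s}(t) ⋯)) · ∏_{i=1}^{s} w_{p_i}(u_{p_{i+1}}(⋯ u_{p_s}(t) ⋯))`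
for the list `[p₁, …, p_s]`, defined by the recursion
`gen (p :: ps) f = gen ps (fun x => f (u_p x) * w_p x)`. -/
noncomputable def gen (φ : ℝ → ℝ) (a l T : ℝ) (A B : ℕ → ℝ) : List ℕ → (ℝ → ℝ) → ℝ → ℝ
  | [], f, t => f t
  | p :: ps, f, t =>
      gen φ a l T A B ps
        (fun x => f (uMap φ p (A p) (B p) a l T x) * wMap φ p (A p) (B p) a l x) t

/-- The total weight `W_{p₁,…,p_s}(t) = ∏_{i=1}^{s} w_{p_i}(u_{p_{i+1}}(⋯ u_{p_s}(t) ⋯))`. -/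
noncomputable def Wfun (φ : ℝ → ℝ) (a l T : ℝ) (A B : ℕ → ℝ) : List ℕ → ℝ → ℝ
  | [], _ => 1
  | p :: ps, t => wMap φ p (A p) (B p) a l (compU φ a l T A B ps t) * Wfun φ a l T A B ps t

lemma gen_eq (φ : ℝ → ℝ) (a l T : ℝ) (A B : ℕ → ℝ) :
    ∀ (ps : List ℕ) (f : ℝ → ℝ) (t : ℝ),
      gen φ a l T A B ps f t = f (compU φ a l T A B ps t) * Wfun φ a l T A B ps t
  | [], f, t => by simp [gen, compU, Wfun]
  | p :: ps, f, t => by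
      rw [gen, gen_eq φ a l T A B ps]
      simp only [compU, Wfun]
      ring

lemma deriv_nonneg_of_monotone_s3 {f : ℝ → ℝ} (hf : Monotone f) (x : ℝ)
    (hd : DifferentiableAt ℝ f x) : 0 ≤ deriv f x := by
  have h := hd.hasDerivAt
  rw [hasDerivAt_iff_tendsto_slope] at h
  refine ge_of_tendsto h ?_
  filter_upwards [self_mem_nhdsWithin] with y hy
  rw [slope_def_field]
  rcases lt_or_ge x y with h2 | h2
  · exact div_nonneg (by linarith [hf h2.le]) (by linarith)
  · exact div_nonneg_of_nonpos (by linarith [hf h2]) (by linarith)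

/-- For every choice of indices `p₁, …, p_s ∈ {1, …, k}`, the `s`-th
generation functions form an orthogonal system in `L²([a, a+2l])`, and the composite map
`u_{p₁} ∘ ⋯ ∘ u_{p_s}` is an automorphism of `[a, a+2l]`. -/
theorem sth_generation_orthogonal
    (φ : ℝ → ℝ) (hφ : ContDiff ℝ 1 φ) (hmono : StrictMono φ)
    (a l T : ℝ) (hl : 0 < l) (s k : ℕ) (hs : 1 ≤ s) (hk : 1 ≤ k)
    (A B : ℕ → ℝ)
    (hAB : ∀ p, 1 ≤ p → p ≤ k →
      A p < B p ∧ φ^[p] (A p) = T ∧ φ^[p] (B p) = T + 2 * l)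
    (f : ℕ → ℝ → ℝ)
    (hf : ∀ n, MemLp (f n) 2 (volume.restrict (Set.Ioc a (a + 2 * l))))
    (horth : ∀ m n, m ≠ n → ∫ t in a..(a + 2 * l), f m t * f n t = 0)
    (ps : List ℕ) (hlen : ps.length = s) (hps : ∀ p ∈ ps, 1 ≤ p ∧ p ≤ k) :
    (∀ m n, m ≠ n →
      ∫ t in a..(a + 2 * l),
        gen φ a l T A B ps (f m) t * gen φ a l T A B ps (f n) t = 0) ∧
    Set.BijOn (compU φ a l T A B ps) (Set.Icc a (a + 2 * l)) (Set.Icc a (a + 2 * l)) := by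
  have hab : a ≤ a + 2 * l := by linarith
  have hderφ : ∀ x, 0 ≤ deriv φ x := fun x =>
    deriv_nonneg_of_monotone_s3 hmono.monotone x ((hφ.differentiable one_ne_zero) x)
  -- per-index facts
  have hw_sq : ∀ (p : ℕ) (t : ℝ),
      wMap φ p (A p) (B p) a l t ^ 2
        = ∏ r ∈ Finset.range p, deriv φ (φ^[r] (rhoMap (A p) (B p) a l t)) := by
    intro p t
    rw [wMap, ← Finset.prod_pow]
    exact Finset.prod_congr rfl fun r _ => Real.sq_sqrt (hderφ _)
  have hw_nonneg : ∀ (p : ℕ) (t : ℝ), 0 ≤ wMap φ p (A p) (B p) a l t := fun p t =>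
    Finset.prod_nonneg fun r _ => Real.sqrt_nonneg _
  have hufacts : ∀ p, 1 ≤ p → p ≤ k →
      StrictMono (uMap φ p (A p) (B p) a l T) ∧
      uMap φ p (A p) (B p) a l T a = a ∧
      uMap φ p (A p) (B p) a l T (a + 2 * l) = a + 2 * l ∧
      (∀ t, HasDerivAt (uMap φ p (A p) (B p) a l T)
        ((B p - A p) / (2 * l) * wMap φ p (A p) (B p) a l t ^ 2) t) := by
    intro p hp1 hpk
    obtain ⟨hABlt, hA, hB⟩ := hAB p hp1 hpk
    set c : ℝ := (B p - A p) / (2 * l) with hc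
    have hcpos : 0 < c := div_pos (by linarith) (by linarith)
    have hρmono : StrictMono (rhoMap (A p) (B p) a l) := by
      intro x y hxy
      simp only [rhoMap]
      have := mul_lt_mul_of_pos_left (sub_lt_sub_right hxy a) hcpos
      linarith
    have humono : StrictMono (uMap φ p (A p) (B p) a l T) := by
      intro x y hxy
      simp only [uMap]
      have := (hmono.iterate p) (hρmono hxy)
      linarith
    have hρa : rhoMap (A p) (B p) a l a = A p := by simp [rhoMap]
    have hρb : rhoMap (A p) (B p) a l (a + 2 * l) = B p := by
      simp only [rhoMap, add_sub_cancel_left]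
      rw [div_mul_cancel₀]
      · ring
      · positivity
    refine ⟨humono, ?_, ?_, ?_⟩
    · simp [uMap, hρa, hA]
    · simp only [uMap, hρb, hB]; ring
    · intro t
      have hρd : HasDerivAt (rhoMap (A p) (B p) a l) c t := by
        have h := (((hasDerivAt_id' t).sub_const a).const_mul c).add_const (A p)
        rw [mul_one] at h
        exact h
      have hcomp := ((iterate_hasDerivAt hφ p (rhoMap (A p) (B p) a l t)).comp t hρd)
      have := (hcomp.sub_const T).add_const a
      have heq : (∏ r ∈ Finset.range p,
          deriv φ (φ^[r] (rhoMap (A p) (B p) a l t))) * c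
            = c * wMap φ p (A p) (B p) a l t ^ 2 := by
        rw [hw_sq p t]; ring
      rw [heq] at this
      exact this
  -- the product of the affine slopes
  set cprod : List ℕ → ℝ := fun qs => (qs.map (fun p => (B p - A p) / (2 * l))).prod
    with hcprod
  -- main induction over the list
  have key : ∀ qs : List ℕ, (∀ p ∈ qs, 1 ≤ p ∧ p ≤ k) →
      StrictMono (compU φ a l T A B qs) ∧
      compU φ a l T A B qs a = a ∧
      compU φ a l T A B qs (a + 2 * l) = a + 2 * l ∧
      0 < cprod qs ∧
      (∀ t, 0 ≤ Wfun φ a l T A B qs t) ∧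
      (∀ t, HasDerivAt (compU φ a l T A B qs)
        (cprod qs * Wfun φ a l T A B qs t ^ 2) t) := by
    intro qs
    induction qs with
    | nil =>
        intro _
        refine ⟨fun x y h => h, rfl, rfl, by simp [hcprod], fun t => zero_le_one, fun t => ?_⟩
        simpa [compU, Wfun, hcprod] using hasDerivAt_id' t
    | cons p qs ih =>
        intro hmem
        obtain ⟨hmonoC, haC, hbC, hcpos, hWnn, hdC⟩ :=
          ih (fun q hq => hmem q (List.mem_cons_of_mem p hq))
        obtain ⟨hp1, hpk⟩ := hmem p (List.mem_cons_self)
        obtain ⟨humono, hua, hub, hud⟩ := hufacts p hp1 hpk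
        have hcppos : 0 < (B p - A p) / (2 * l) :=
          div_pos (by linarith [(hAB p hp1 hpk).1]) (by linarith)
        refine ⟨fun x y h => humono (hmonoC h), ?_, ?_, ?_, fun t => ?_, fun t => ?_⟩
        · simp only [compU, haC, hua]
        · simp only [compU, hbC, hub]
        · simp only [hcprod, List.map_cons, List.prod_cons]
          exact mul_pos hcppos hcpos
        · exact mul_nonneg (hw_nonneg _ _) (hWnn t)
        · have h := (hud (compU φ a l T A B qs t)).comp t (hdC t)
          have heq : (B p - A p) / (2 * l)
                * wMap φ p (A p) (B p) a l (compU φ a l T A B qs t) ^ 2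
                * (cprod qs * Wfun φ a l T A B qs t ^ 2)
              = cprod (p :: qs) * Wfun φ a l T A B (p :: qs) t ^ 2 := by
            simp only [hcprod, List.map_cons, List.prod_cons, Wfun]
            ring
          rw [heq] at h
          exact h
  obtain ⟨hmonoC, haC, hbC, hcpos, hWnn, hdC⟩ := key ps hps
  set C := compU φ a l T A B ps with hCdef
  set W := Wfun φ a l T A B ps with hWdef
  have hbij : Set.BijOn C (Set.Icc a (a + 2 * l)) (Set.Icc a (a + 2 * l)) := by
    refine ⟨?_, hmonoC.injective.injOn, ?_⟩
    · intro x hx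
      constructor
      · rw [← haC]; exact hmonoC.monotone hx.1
      · rw [← hbC]; exact hmonoC.monotone hx.2
    · have hcont : ContinuousOn C (Set.Icc a (a + 2 * l)) :=
        (fun x _ => ((hdC x).differentiableAt.continuousAt).continuousWithinAt)
      have := intermediate_value_Icc hab hcont
      rw [haC, hbC] at this
      exact this
  refine ⟨?_, hbij⟩
  intro m n hmn
  have himg : C '' Set.Ioc a (a + 2 * l) = Set.Ioc a (a + 2 * l) := by
    rw [← Set.Icc_diff_left, Set.image_diff hmonoC.injective, hbij.image_eq,
      Set.image_singleton, haC, Set.Icc_diff_left]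
  have hsub := MeasureTheory.integral_image_eq_integral_abs_deriv_smul
      (s := Set.Ioc a (a + 2 * l)) (f := C) (f' := fun x => cprod ps * W x ^ 2)
      measurableSet_Ioc
      (fun x _ => (hdC x).hasDerivWithinAt)
      (hmonoC.injective.injOn)
      (fun y => f m y * f n y)
  rw [himg] at hsub
  have h0 : ∫ x in Set.Ioc a (a + 2 * l), f m x * f n x = 0 := by
    rw [← intervalIntegral.integral_of_le hab]
    exact horth m n hmn
  rw [intervalIntegral.integral_of_le hab]
  have hpt : ∀ t : ℝ,
      gen φ a l T A B ps (f m) t * gen φ a l T A B ps (f n) t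
        = (cprod ps)⁻¹ * (|cprod ps * W t ^ 2| • (f m (C t) * f n (C t))) := by
    intro t
    rw [gen_eq, gen_eq, abs_of_nonneg (mul_nonneg hcpos.le (sq_nonneg _)), smul_eq_mul]
    field_simp
    ring
  calc ∫ t in Set.Ioc a (a + 2 * l),
          gen φ a l T A B ps (f m) t * gen φ a l T A B ps (f n) t
      = ∫ t in Set.Ioc a (a + 2 * l),
          (cprod ps)⁻¹ * (|cprod ps * W t ^ 2| • (f m (C t) * f n (C t))) := by
        exact setIntegral_congr_fun measurableSet_Ioc (fun t _ => hpt t)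
    _ = (cprod ps)⁻¹ * ∫ t in Set.Ioc a (a + 2 * l),
          |cprod ps * W t ^ 2| • (f m (C t) * f n (C t)) := by
        rw [integral_const_mul]
    _ = (cprod ps)⁻¹ * ∫ x in Set.Ioc a (a + 2 * l), f m x * f n x := by rw [← hsub]
    _ = 0 := by rw [h0, mul_zero]
end

section
/- Let φ : ℝ → ℝ be continuously differentiable and strictly increasing, let T ∈ ℝ, and take a = −1, l = 1 (so [a, a+2l] = [−1, 1]). Let k ≥ 1 and for each p ∈ {1, …, k} let A_p < B_p satisfy φ^[p](A_p) = T and φ^[p](B_p) = T + 2. Let P_n denote the n-th Legendre polynomial. Then for every choice of indices p₁, p₂, p₃ ∈ {1, …, k}, the third-generation functions P_n^{p₁,p₂,p₃}(t) := P_n(u_{p₁}(u_{p₂}(u_{p₃}(t)))) · w_{p₁}(u_{p₂}(u_{p₃}(t))) · w_{p₂}(u_{p₃}(t)) · w_{p₃}(t) form an orthogonal system in L²([−1, 1]): ∫_{−1}^{1} P_m^{p₁,p₂,p₃}(t) P_n^{p₁,p₂,p₃}(t) dt = 0 for all m ≠ n. -/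
open MeasureTheory Set

/-- The `n`-th Legendre polynomial, by Rodrigues' formula
`P_n(t) = (1/(2ⁿ n!)) dⁿ/dtⁿ (t² − 1)ⁿ`. -/
noncomputable def legendreP (n : ℕ) (t : ℝ) : ℝ :=
  (1 / (2 ^ n * (n.factorial : ℝ))) * iteratedDeriv n (fun x : ℝ => (x ^ 2 - 1) ^ n) t

namespace LegendreThirdGenAux

open Polynomial

/-- The Rodrigues polynomial `D^n((X²−1)ⁿ)`. -/
noncomputable def Qp (n : ℕ) : Polynomial ℝ := derivative^[n] ((X ^ 2 - 1) ^ n)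

lemma iteratedDeriv_polyEval (p : Polynomial ℝ) (n : ℕ) :
    iteratedDeriv n (fun x : ℝ => p.eval x) = fun x => (derivative^[n] p).eval x := by
  induction n with
  | zero => simp
  | succ n ih =>
    rw [iteratedDeriv_succ, ih, Function.iterate_succ_apply']
    funext x
    exact Polynomial.deriv _

lemma legendreP_eq (n : ℕ) (t : ℝ) :
    legendreP n t = (1 / (2 ^ n * (n.factorial : ℝ))) * (Qp n).eval t := by
  unfold legendreP Qp
  congr 1
  have h : (fun x : ℝ => (x ^ 2 - 1) ^ n)
      = fun x : ℝ => ((X ^ 2 - 1 : Polynomial ℝ) ^ n).eval x := by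
    funext x; simp
  rw [h, iteratedDeriv_polyEval]

lemma continuous_legendreP (n : ℕ) : Continuous (legendreP n) := by
  have h : legendreP n = fun t => (1 / (2 ^ n * (n.factorial : ℝ))) * (Qp n).eval t :=
    funext (legendreP_eq n)
  rw [h]
  exact continuous_const.mul (Qp n).continuous

lemma exists_factor (n j : ℕ) (hj : j ≤ n) :
    ∃ h : Polynomial ℝ, derivative^[j] ((X ^ 2 - 1) ^ n) = (X ^ 2 - 1) ^ (n - j) * h := by
  induction j with
  | zero => exact ⟨1, by simp⟩
  | succ j ih =>
    obtain ⟨h, hh⟩ := ih (Nat.le_of_succ_le hj)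
    have e1 : n - j = (n - (j + 1)) + 1 := by omega
    refine ⟨C ((n - j : ℕ) : ℝ) * derivative (X ^ 2 - 1 : Polynomial ℝ) * h
      + (X ^ 2 - 1) * derivative h, ?_⟩
    rw [Function.iterate_succ_apply', hh, derivative_mul, derivative_pow, e1]
    simp only [Nat.add_sub_cancel]
    rw [pow_succ]
    ring

lemma bdry (n j : ℕ) (hj : j < n) :
    (derivative^[j] ((X ^ 2 - 1 : Polynomial ℝ) ^ n)).eval 1 = 0 ∧
    (derivative^[j] ((X ^ 2 - 1 : Polynomial ℝ) ^ n)).eval (-1) = 0 := by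
  obtain ⟨h, hh⟩ := exists_factor n j hj.le
  have hnj : n - j ≠ 0 := by omega
  constructor <;> · rw [hh]; simp [zero_pow hnj]

lemma parts (f g : Polynomial ℝ) (n : ℕ)
    (hb : ∀ j < n, (derivative^[j] f).eval 1 = 0 ∧ (derivative^[j] f).eval (-1) = 0) :
    ∫ t in (-1:ℝ)..1, g.eval t * (derivative^[n] f).eval t
      = (-1) ^ n * ∫ t in (-1:ℝ)..1, (derivative^[n] g).eval t * f.eval t := by
  induction n generalizing g with
  | zero => simp
  | succ n ih =>
    have key : ∫ t in (-1:ℝ)..1, g.eval t * (derivative^[n+1] f).eval t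
        = - ∫ t in (-1:ℝ)..1, (derivative g).eval t * (derivative^[n] f).eval t := by
      have hparts := intervalIntegral.integral_mul_deriv_eq_deriv_mul
        (u := fun t : ℝ => g.eval t) (u' := fun t : ℝ => (derivative g).eval t)
        (v := fun t : ℝ => (derivative^[n] f).eval t)
        (v' := fun t : ℝ => (derivative^[n+1] f).eval t)
        (a := (-1:ℝ)) (b := 1)
        (fun x _ => g.hasDerivAt x)
        (fun x _ => by
          simpa [Function.iterate_succ_apply'] using (derivative^[n] f).hasDerivAt x)
        ((derivative g).continuous_aeval.intervalIntegrable _ _)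
        ((derivative^[n+1] f).continuous_aeval.intervalIntegrable _ _)
      rw [hparts, (hb n (Nat.lt_succ_self n)).1, (hb n (Nat.lt_succ_self n)).2]
      ring
    rw [key, ih (derivative g) (fun j hj => hb j (by omega)), ← Function.iterate_succ_apply]
    ring

lemma Qp_orth {m n : ℕ} (h : m < n) :
    ∫ t in (-1:ℝ)..1, (Qp m).eval t * (Qp n).eval t = 0 := by
  have hp := parts ((X ^ 2 - 1) ^ n) (Qp m) n (fun j hj => bdry n j hj)
  have hz : derivative^[n] (Qp m) = 0 := by
    unfold Qp
    rw [← Function.iterate_add_apply]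
    apply iterate_derivative_eq_zero
    calc ((X ^ 2 - 1 : Polynomial ℝ) ^ m).natDegree
        ≤ m * (X ^ 2 - 1 : Polynomial ℝ).natDegree := natDegree_pow_le
      _ ≤ m * 2 := by
          apply Nat.mul_le_mul_left
          calc (X ^ 2 - 1 : Polynomial ℝ).natDegree
              ≤ max (X ^ 2 : Polynomial ℝ).natDegree (1 : Polynomial ℝ).natDegree :=
                natDegree_sub_le _ _
            _ ≤ 2 := by simp [natDegree_X_pow]
      _ < n + m := by omega
  rw [show (Qp n) = derivative^[n] ((X ^ 2 - 1) ^ n) from rfl] at *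
  rw [hp, hz]
  simp

lemma legendre_orth_lt {m n : ℕ} (h : m < n) :
    ∫ t in (-1:ℝ)..1, legendreP m t * legendreP n t = 0 := by
  have hpt : ∀ t : ℝ, legendreP m t * legendreP n t
      = ((1 / (2 ^ m * (m.factorial : ℝ))) * (1 / (2 ^ n * (n.factorial : ℝ))))
        * ((Qp m).eval t * (Qp n).eval t) := by
    intro t; rw [legendreP_eq, legendreP_eq]; ring
  simp only [hpt]
  rw [intervalIntegral.integral_const_mul, Qp_orth h, mul_zero]

lemma legendre_orth {m n : ℕ} (h : m ≠ n) :
    ∫ t in (-1:ℝ)..1, legendreP m t * legendreP n t = 0 := by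
  rcases h.lt_or_gt with h' | h'
  · exact legendre_orth_lt h'
  · have hpt : ∀ t : ℝ, legendreP m t * legendreP n t = legendreP n t * legendreP m t :=
      fun t => mul_comm _ _
    simp only [hpt]
    exact legendre_orth_lt h'

lemma deriv_nonneg_of_monotone {f : ℝ → ℝ} (hm : Monotone f) (hd : Differentiable ℝ f)
    (x : ℝ) : 0 ≤ deriv f x := by
  have h := ((hd x).hasDerivAt).hasDerivWithinAt (s := Set.Ioi x)
  rw [hasDerivWithinAt_iff_tendsto_slope] at h
  have hs : Set.Ioi x \ {x} = Set.Ioi x := by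
    rw [Set.diff_singleton_eq_self]; simp
  rw [hs] at h
  refine ge_of_tendsto h ?_
  filter_upwards [self_mem_nhdsWithin] with y hy
  have hxy : x < y := hy
  rw [slope_def_field]
  exact div_nonneg (sub_nonneg.2 (hm hxy.le)) (sub_nonneg.2 hxy.le)

lemma iterate_hasDerivAt (φ : ℝ → ℝ) (hφ : ContDiff ℝ 1 φ) (p : ℕ) (x : ℝ) :
    HasDerivAt (φ^[p]) (∏ r ∈ Finset.range p, deriv φ (φ^[r] x)) x := by
  induction p with
  | zero => simpa using hasDerivAt_id x
  | succ p ih =>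
    have hφd : HasDerivAt φ (deriv φ (φ^[p] x)) (φ^[p] x) :=
      (hφ.differentiable one_ne_zero (φ^[p] x)).hasDerivAt
    have h := hφd.comp x ih
    rw [Function.iterate_succ', Finset.prod_range_succ]
    rw [mul_comm]
    exact h

lemma continuous_rho (A B : ℝ) : Continuous (rhoMap A B (-1) 1) := by
  unfold rhoMap; fun_prop

/-- Key change-of-variables lemma. -/
lemma subst_lemma (φ : ℝ → ℝ) (hφ : ContDiff ℝ 1 φ) (hmono : StrictMono φ)
    (T : ℝ) (p : ℕ) (A B : ℝ) (hAB : A < B) (hA : φ^[p] A = T) (hB : φ^[p] B = T + 2)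
    (g : ℝ → ℝ) (hg : Continuous g) :
    ∫ t in (-1:ℝ)..1, g (uMap φ p A B (-1) 1 T t) * (wMap φ p A B (-1) 1 t) ^ 2
      = (2 / (B - A)) * ∫ s in (-1:ℝ)..1, g s := by
  have hdiff : Differentiable ℝ φ := hφ.differentiable one_ne_zero
  have hd0 : ∀ y, 0 ≤ deriv φ y := deriv_nonneg_of_monotone hmono.monotone hdiff
  set ρ := rhoMap A B (-1) 1 with hρdef
  set c : ℝ := (B - A) / (2 * 1) with hcdef
  have hρd : ∀ t : ℝ, HasDerivAt ρ c t := by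
    intro t
    have h := (((hasDerivAt_id t).sub_const (-1)).const_mul c).add_const A
    have he : ρ = fun t => c * (t - (-1)) + A := rfl
    rw [he]
    simpa using h
  have hud : ∀ t : ℝ, HasDerivAt (uMap φ p A B (-1) 1 T)
      (c * ∏ r ∈ Finset.range p, deriv φ (φ^[r] (ρ t))) t := by
    intro t
    have h1 := (iterate_hasDerivAt φ hφ p (ρ t)).comp t (hρd t)
    have h2 := (h1.sub_const T).add_const (-1)
    have : uMap φ p A B (-1) 1 T = fun t => (φ^[p] ∘ ρ) t - T + (-1) := by
      funext s; simp [uMap, hρdef, Function.comp]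
    rw [this]
    simpa [mul_comm] using h2
  have hw2 : ∀ t : ℝ, (wMap φ p A B (-1) 1 t) ^ 2
      = ∏ r ∈ Finset.range p, deriv φ (φ^[r] (ρ t)) := by
    intro t
    rw [wMap, ← Finset.prod_pow]
    exact Finset.prod_congr rfl (fun r _ => Real.sq_sqrt (hd0 _))
  have hBA : B - A ≠ 0 := sub_ne_zero.2 hAB.ne'
  have hpt : ∀ t : ℝ, g (uMap φ p A B (-1) 1 T t) * (wMap φ p A B (-1) 1 t) ^ 2
      = (2 / (B - A)) *
        ((c * ∏ r ∈ Finset.range p, deriv φ (φ^[r] (ρ t))) • g (uMap φ p A B (-1) 1 T t)) := by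
    intro t
    rw [hw2, smul_eq_mul, hcdef]
    field_simp
  simp only [hpt]
  rw [intervalIntegral.integral_const_mul]
  congr 1
  have hcont : ContinuousOn (fun t : ℝ => c * ∏ r ∈ Finset.range p, deriv φ (φ^[r] (ρ t)))
      (Set.uIcc (-1:ℝ) 1) := by
    apply Continuous.continuousOn
    apply continuous_const.mul
    apply continuous_finset_prod
    intro r _
    exact (hφ.continuous_deriv le_rfl).comp
      ((hφ.continuous.iterate r).comp (continuous_rho A B))
  have hcv := intervalIntegral.integral_comp_smul_deriv
    (f := uMap φ p A B (-1) 1 T)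
    (f' := fun t : ℝ => c * ∏ r ∈ Finset.range p, deriv φ (φ^[r] (ρ t)))
    (g := g) (fun x _ => hud x) hcont hg
  have hρa : ρ (-1) = A := by simp [hρdef, rhoMap]
  have hρb : ρ 1 = B := by
    simp only [hρdef, rhoMap]
    have : (1 : ℝ) - (-1) = 2 := by norm_num
    rw [this]
    field_simp
    ring
  have hua : uMap φ p A B (-1) 1 T (-1) = -1 := by
    have : rhoMap A B (-1) 1 (-1) = A := hρa
    simp [uMap, this, hA]
  have hub : uMap φ p A B (-1) 1 T 1 = 1 := by
    have : rhoMap A B (-1) 1 1 = B := hρb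
    simp [uMap, this, hB]
    ring
  simp only [Function.comp] at hcv
  rw [hcv, hua, hub]

end LegendreThirdGenAux

open LegendreThirdGenAux

/-- With `a = −1`, `l = 1`, for every choice of `p₁, p₂, p₃ ∈ {1,…,k}`
the third-generation functions
`P_n^{p₁,p₂,p₃}(t) = P_n(u_{p₁}(u_{p₂}(u_{p₃}(t)))) · w_{p₁}(u_{p₂}(u_{p₃}(t))) ·
w_{p₂}(u_{p₃}(t)) · w_{p₃}(t)` form an orthogonal system in `L²([−1,1])`. -/
theorem legendre_third_generation_orthogonal
    (φ : ℝ → ℝ) (hφ : ContDiff ℝ 1 φ) (hmono : StrictMono φ)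
    (T : ℝ) (k : ℕ) (hk : 1 ≤ k)
    (A B : ℕ → ℝ)
    (hAB : ∀ p, 1 ≤ p → p ≤ k →
      A p < B p ∧ φ^[p] (A p) = T ∧ φ^[p] (B p) = T + 2)
    (p₁ p₂ p₃ : ℕ)
    (hp₁ : 1 ≤ p₁ ∧ p₁ ≤ k) (hp₂ : 1 ≤ p₂ ∧ p₂ ≤ k) (hp₃ : 1 ≤ p₃ ∧ p₃ ≤ k) :
    ∀ m n : ℕ, m ≠ n →
      ∫ t in (-1 : ℝ)..1,
        (legendreP m
            (uMap φ p₁ (A p₁) (B p₁) (-1) 1 T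
              (uMap φ p₂ (A p₂) (B p₂) (-1) 1 T (uMap φ p₃ (A p₃) (B p₃) (-1) 1 T t))) *
          wMap φ p₁ (A p₁) (B p₁) (-1) 1
            (uMap φ p₂ (A p₂) (B p₂) (-1) 1 T (uMap φ p₃ (A p₃) (B p₃) (-1) 1 T t)) *
          wMap φ p₂ (A p₂) (B p₂) (-1) 1 (uMap φ p₃ (A p₃) (B p₃) (-1) 1 T t) *
          wMap φ p₃ (A p₃) (B p₃) (-1) 1 t) *
        (legendreP n
            (uMap φ p₁ (A p₁) (B p₁) (-1) 1 T
              (uMap φ p₂ (A p₂) (B p₂) (-1) 1 T (uMap φ p₃ (A p₃) (B p₃) (-1) 1 T t))) *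
          wMap φ p₁ (A p₁) (B p₁) (-1) 1
            (uMap φ p₂ (A p₂) (B p₂) (-1) 1 T (uMap φ p₃ (A p₃) (B p₃) (-1) 1 T t)) *
          wMap φ p₂ (A p₂) (B p₂) (-1) 1 (uMap φ p₃ (A p₃) (B p₃) (-1) 1 T t) *
          wMap φ p₃ (A p₃) (B p₃) (-1) 1 t) = 0 := by
  intro m n hmn
  obtain ⟨h₁lt, h₁A, h₁B⟩ := hAB p₁ hp₁.1 hp₁.2
  obtain ⟨h₂lt, h₂A, h₂B⟩ := hAB p₂ hp₂.1 hp₂.2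
  obtain ⟨h₃lt, h₃A, h₃B⟩ := hAB p₃ hp₃.1 hp₃.2
  have hρc : ∀ (A B : ℝ), Continuous (rhoMap A B (-1) 1) := fun A B => continuous_rho A B
  have hcu : ∀ (p : ℕ) (A B : ℝ), Continuous (uMap φ p A B (-1) 1 T) := by
    intro p A B
    unfold uMap
    exact (((hφ.continuous.iterate p).comp (hρc A B)).sub continuous_const).add continuous_const
  have hcw : ∀ (p : ℕ) (A B : ℝ), Continuous (wMap φ p A B (-1) 1) := by
    intro p A B
    unfold wMap
    apply continuous_finset_prod
    intro r _
    exact Real.continuous_sqrt.comp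
      ((hφ.continuous_deriv le_rfl).comp ((hφ.continuous.iterate r).comp (hρc A B)))
  set g₁ : ℝ → ℝ := fun s => legendreP m s * legendreP n s with hg₁def
  set g₂ : ℝ → ℝ := fun s =>
    g₁ (uMap φ p₁ (A p₁) (B p₁) (-1) 1 T s) * (wMap φ p₁ (A p₁) (B p₁) (-1) 1 s) ^ 2 with hg₂def
  set g₃ : ℝ → ℝ := fun s =>
    g₂ (uMap φ p₂ (A p₂) (B p₂) (-1) 1 T s) * (wMap φ p₂ (A p₂) (B p₂) (-1) 1 s) ^ 2 with hg₃def
  have hg₁ : Continuous g₁ := (continuous_legendreP m).mul (continuous_legendreP n)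
  have hg₂ : Continuous g₂ := (hg₁.comp (hcu _ _ _)).mul ((hcw _ _ _).pow 2)
  have hg₃ : Continuous g₃ := (hg₂.comp (hcu _ _ _)).mul ((hcw _ _ _).pow 2)
  have hpt : ∀ t : ℝ,
      (legendreP m
            (uMap φ p₁ (A p₁) (B p₁) (-1) 1 T
              (uMap φ p₂ (A p₂) (B p₂) (-1) 1 T (uMap φ p₃ (A p₃) (B p₃) (-1) 1 T t))) *
          wMap φ p₁ (A p₁) (B p₁) (-1) 1
            (uMap φ p₂ (A p₂) (B p₂) (-1) 1 T (uMap φ p₃ (A p₃) (B p₃) (-1) 1 T t)) *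
          wMap φ p₂ (A p₂) (B p₂) (-1) 1 (uMap φ p₃ (A p₃) (B p₃) (-1) 1 T t) *
          wMap φ p₃ (A p₃) (B p₃) (-1) 1 t) *
        (legendreP n
            (uMap φ p₁ (A p₁) (B p₁) (-1) 1 T
              (uMap φ p₂ (A p₂) (B p₂) (-1) 1 T (uMap φ p₃ (A p₃) (B p₃) (-1) 1 T t))) *
          wMap φ p₁ (A p₁) (B p₁) (-1) 1
            (uMap φ p₂ (A p₂) (B p₂) (-1) 1 T (uMap φ p₃ (A p₃) (B p₃) (-1) 1 T t)) *
          wMap φ p₂ (A p₂) (B p₂) (-1) 1 (uMap φ p₃ (A p₃) (B p₃) (-1) 1 T t) *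
          wMap φ p₃ (A p₃) (B p₃) (-1) 1 t)
      = g₃ (uMap φ p₃ (A p₃) (B p₃) (-1) 1 T t) * (wMap φ p₃ (A p₃) (B p₃) (-1) 1 t) ^ 2 := by
    intro t
    simp only [hg₃def, hg₂def, hg₁def]
    ring
  simp only [hpt]
  rw [subst_lemma φ hφ hmono T p₃ (A p₃) (B p₃) h₃lt h₃A h₃B g₃ hg₃]
  rw [show (∫ s in (-1:ℝ)..1, g₃ s)
      = ∫ s in (-1:ℝ)..1, g₂ (uMap φ p₂ (A p₂) (B p₂) (-1) 1 T s)
          * (wMap φ p₂ (A p₂) (B p₂) (-1) 1 s) ^ 2 from rfl]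
  rw [subst_lemma φ hφ hmono T p₂ (A p₂) (B p₂) h₂lt h₂A h₂B g₂ hg₂]
  rw [show (∫ s in (-1:ℝ)..1, g₂ s)
      = ∫ s in (-1:ℝ)..1, g₁ (uMap φ p₁ (A p₁) (B p₁) (-1) 1 T s)
          * (wMap φ p₁ (A p₁) (B p₁) (-1) 1 s) ^ 2 from rfl]
  rw [subst_lemma φ hφ hmono T p₁ (A p₁) (B p₁) h₁lt h₁A h₁B g₁ hg₁]
  rw [show (∫ s in (-1:ℝ)..1, g₁ s)
      = ∫ s in (-1:ℝ)..1, legendreP m s * legendreP n s from rfl]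
  rw [legendre_orth hmn]
  ring
end
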